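/- Let A be n×n SPD with diagonal D and suppose b > 0 satisfies vᵀAv ≤ b vᵀDv for all v. Let p be a polynomial with p(0) = 1 and |p(t)| < 1 for all t in (0, 1]. Define M⁻¹ := (I − p(b⁻¹D⁻¹A)) A⁻¹. Then M is well-defined (I − p(b⁻¹D⁻¹A) is invertible), M is symmetric positive definite, and 2M − A is symmetric positive definite (i.e., the iteration with M is A-convergent). -/

import Mathlib

open Matrix Polynomial

lemma myconj_pow {R : Type*} [Ring R] (u x v : R) (huv : u*v=1) (hvu : v*u=1) (k : ℕ) :
    (u*x*v)^k = u * x^k * v := by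
  induction k with
  | zero => simp [huv]
  | succ k ih =>
    rw [pow_succ, ih, pow_succ, mul_assoc (u * x ^ k) v, ← mul_assoc v (u*x) v, ← mul_assoc v u x,
      hvu, one_mul, ← mul_assoc, mul_assoc u (x^k) x]

lemma myaeval_conj {R A' : Type*} [CommSemiring R] [Ring A'] [Algebra R A']
    (u x v : A') (huv : u*v=1) (hvu : v*u=1) (p : R[X]) :
    aeval (u*x*v) p = u * aeval x p * v := by
  induction p using Polynomial.induction_on' with
  | add f g hf hg => rw [map_add, map_add, hf, hg, mul_add, add_mul]
  | monomial k a =>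
    rw [aeval_monomial, aeval_monomial, myconj_pow u x v huv hvu,
      ← mul_assoc u ((algebraMap R A') a) (x^k), ← Algebra.commutes a u,
      mul_assoc ((algebraMap R A') a) u (x^k)]
    simp [mul_assoc]

lemma myaeval_diagonal {m : Type*} [Fintype m] [DecidableEq m] (f : m → ℝ) (p : ℝ[X]) :
    aeval (Matrix.diagonal f) p = Matrix.diagonal (fun i => p.eval (f i)) := by
  induction p using Polynomial.induction_on' with
  | add f g hf hg => rw [map_add, hf, hg, diagonal_add]; simp
  | monomial k a =>
    simp only [aeval_monomial, diagonal_pow, algebraMap_eq_diagonal, diagonal_mul_diagonal,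
      eval_monomial]
    congr 1

lemma myposdef_smul {m : Type*} [Fintype m] {c : ℝ} (hc : 0 < c) {M : Matrix m m ℝ}
    (hM : M.PosDef) : (c • M).PosDef := by
  refine Matrix.PosDef.of_dotProduct_mulVec_pos ?_ (fun x hx => ?_)
  · unfold Matrix.IsHermitian
    rw [conjTranspose_smul, hM.1.eq]
    simp
  · rw [smul_mulVec, dotProduct_smul, smul_eq_mul]
    exact mul_pos hc (hM.dotProduct_mulVec_pos hx)

lemma myposdef_conj {m : Type*} [Fintype m] [DecidableEq m] {M C : Matrix m m ℝ}
    (hM : M.PosDef) (hC : IsUnit C) : (C * M * Cᴴ).PosDef := by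
  refine Matrix.PosDef.of_dotProduct_mulVec_pos ?_ (fun x hx => ?_)
  · unfold Matrix.IsHermitian
    simp only [conjTranspose_mul, conjTranspose_conjTranspose, hM.1.eq, mul_assoc]
  · have hCH : IsUnit Cᴴ := by
      rw [Matrix.isUnit_iff_isUnit_det] at hC ⊢
      simpa using hC
    have hy : Cᴴ *ᵥ x ≠ 0 :=
      (Matrix.mulVec_injective_iff_isUnit.mpr hCH |>.ne_iff' (by simp)).2 hx
    have := hM.dotProduct_mulVec_pos hy
    rwa [star_mulVec, conjTranspose_conjTranspose, ← dotProduct_mulVec,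
      Matrix.mulVec_mulVec, Matrix.mulVec_mulVec] at this

lemma mydot_conj {m : Type*} [Fintype m] [DecidableEq m] (f : m → ℝ) (M : Matrix m m ℝ)
    (v : m → ℝ) :
    v ⬝ᵥ (Matrix.diagonal f * M * Matrix.diagonal f) *ᵥ v
      = (Matrix.diagonal f *ᵥ v) ⬝ᵥ M *ᵥ (Matrix.diagonal f *ᵥ v) := by
  rw [← Matrix.mulVec_mulVec, ← Matrix.mulVec_mulVec, dotProduct_mulVec]
  congr 1
  funext i
  simp [Matrix.vecMul_diagonal, Matrix.mulVec_diagonal, mul_comm]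

set_option maxHeartbeats 2000000 in
theorem stmt17 {n : ℕ}
    (A : Matrix (Fin n) (Fin n) ℝ) (hA : A.PosDef)
    (b : ℝ) (hb : 0 < b)
    (hbd : ∀ v : Fin n → ℝ,
      v ⬝ᵥ A.mulVec v ≤ b * (v ⬝ᵥ (Matrix.diagonal (fun i => A i i)).mulVec v))
    (p : Polynomial ℝ) (hp0 : p.eval 0 = 1)
    (hp : ∀ t : ℝ, 0 < t → t ≤ 1 → |p.eval t| < 1) :
    IsUnit ((1 : Matrix (Fin n) (Fin n) ℝ)
        - Polynomial.aeval (b⁻¹ • ((Matrix.diagonal (fun i => A i i))⁻¹ * A)) p) ∧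
    (A * ((1 : Matrix (Fin n) (Fin n) ℝ)
        - Polynomial.aeval (b⁻¹ • ((Matrix.diagonal (fun i => A i i))⁻¹ * A)) p)⁻¹).PosDef ∧
    ((2 : ℝ) • (A * ((1 : Matrix (Fin n) (Fin n) ℝ)
        - Polynomial.aeval (b⁻¹ • ((Matrix.diagonal (fun i => A i i))⁻¹ * A)) p)⁻¹)
      - A).PosDef := by
  classical
  have hd : ∀ i, 0 < A i i := by
    intro i
    have h1 : (Pi.single i 1 : Fin n → ℝ) ≠ 0 := by
      intro h; simpa using congrFun h i
    have := hA.dotProduct_mulVec_pos h1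
    simpa [Matrix.mulVec_single, dotProduct_single] using this
  set d : Fin n → ℝ := fun i => A i i with hddef
  set s : Fin n → ℝ := fun i => Real.sqrt (d i) with hsdef
  have hs : ∀ i, 0 < s i := fun i => Real.sqrt_pos.mpr (hd i)
  have hss : ∀ i, s i * s i = d i := fun i => Real.mul_self_sqrt (hd i).le
  set S : Matrix (Fin n) (Fin n) ℝ := Matrix.diagonal (fun i => (s i)⁻¹) with hSdef
  set T : Matrix (Fin n) (Fin n) ℝ := Matrix.diagonal s with hTdef
  have unitOf : ∀ {X Y : Matrix (Fin n) (Fin n) ℝ}, X * Y = 1 → IsUnit X := by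
    intro X Y h
    rw [Matrix.isUnit_iff_isUnit_det]
    exact IsUnit.of_mul_eq_one _ (by rw [← Matrix.det_mul, h, Matrix.det_one])
  have hST : S * T = 1 := by
    rw [hSdef, hTdef, Matrix.diagonal_mul_diagonal]
    rw [show (fun i => (s i)⁻¹ * s i) = fun _ : Fin n => (1:ℝ) from
      funext fun i => inv_mul_cancel₀ (hs i).ne', Matrix.diagonal_one]
  have hTS : T * S = 1 := by
    rw [hTdef, hSdef, Matrix.diagonal_mul_diagonal]
    rw [show (fun i => s i * (s i)⁻¹) = fun _ : Fin n => (1:ℝ) from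
      funext fun i => mul_inv_cancel₀ (hs i).ne', Matrix.diagonal_one]
  have hSh : Sᴴ = S := by rw [hSdef, Matrix.diagonal_conjTranspose]; simp
  have hTh : Tᴴ = T := by rw [hTdef, Matrix.diagonal_conjTranspose]; simp
  have hDinv : (Matrix.diagonal d)⁻¹ = S * S := by
    apply Matrix.inv_eq_right_inv
    rw [hSdef, Matrix.diagonal_mul_diagonal, Matrix.diagonal_mul_diagonal]
    rw [show (fun i => d i * ((s i)⁻¹ * (s i)⁻¹)) = fun _ : Fin n => (1:ℝ) from
      funext fun i => by rw [← hss i, ← mul_inv]; exact mul_inv_cancel₀ (mul_pos (hs i) (hs i)).ne', Matrix.diagonal_one]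
  set B : Matrix (Fin n) (Fin n) ℝ := b⁻¹ • (S * A * S) with hBdef
  have hBpd : B.PosDef := by
    refine myposdef_smul (inv_pos.mpr hb) ?_
    have := myposdef_conj (M := A) (C := S) hA (unitOf hST)
    rwa [hSh] at this
  have hBh : B.IsHermitian := hBpd.1
  set V : Matrix (Fin n) (Fin n) ℝ := (hBh.eigenvectorUnitary : Matrix (Fin n) (Fin n) ℝ)
    with hVdef
  set μ : Fin n → ℝ := hBh.eigenvalues with hμdef
  have hVVs : V * star V = 1 := (Matrix.mem_unitaryGroup_iff).mp hBh.eigenvectorUnitary.2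
  have hVsV : star V * V = 1 := (Matrix.mem_unitaryGroup_iff').mp hBh.eigenvectorUnitary.2
  have hVh : Vᴴ = star V := rfl
  have cancel1 : ∀ X : Matrix (Fin n) (Fin n) ℝ, star V * (V * X) = X := fun X => by
    rw [← Matrix.mul_assoc, hVsV, Matrix.one_mul]
  have cancel2 : ∀ X : Matrix (Fin n) (Fin n) ℝ, T * (S * X) = X := fun X => by
    rw [← Matrix.mul_assoc, hTS, Matrix.one_mul]
  have dcancel : ∀ (f g : Fin n → ℝ) (X : Matrix (Fin n) (Fin n) ℝ),
      Matrix.diagonal f * (Matrix.diagonal g * X) = Matrix.diagonal (fun i => f i * g i) * X :=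
    fun f g X => by rw [← Matrix.mul_assoc, Matrix.diagonal_mul_diagonal]
  have hspec : B = V * Matrix.diagonal μ * star V := by
    have h := hBh.spectral_theorem
    rw [show (RCLike.ofReal ∘ hBh.eigenvalues : Fin n → ℝ) = μ from
      funext fun i => by simp [hμdef]] at h
    exact h
  -- eigenvalue bounds
  have hμpos : ∀ i, 0 < μ i := hBpd.eigenvalues_pos
  have hμle : ∀ i, μ i ≤ 1 := by
    intro i
    set v : Fin n → ℝ := ⇑(hBh.eigenvectorBasis i) with hv
    have hv0 : v ≠ 0 := by
      intro h
      exact hBh.eigenvectorBasis.orthonormal.ne_zero i (by ext j; exact congrFun h j)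
    have hvv : 0 < v ⬝ᵥ v := by
      have := Matrix.dotProduct_star_self_pos_iff (v := v) |>.mpr hv0
      simpa using this
    have hBv : B *ᵥ v = μ i • v := hBh.mulVec_eigenvectorBasis i
    have hray : v ⬝ᵥ B *ᵥ v ≤ v ⬝ᵥ v := by
      have h1 : v ⬝ᵥ B *ᵥ v = b⁻¹ * ((S *ᵥ v) ⬝ᵥ A *ᵥ (S *ᵥ v)) := by
        rw [hBdef, smul_mulVec, dotProduct_smul, smul_eq_mul, hSdef, mydot_conj]
      have h2 : (S *ᵥ v) ⬝ᵥ Matrix.diagonal d *ᵥ (S *ᵥ v) = v ⬝ᵥ v := by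
        rw [hSdef, ← mydot_conj]
        have : Matrix.diagonal (fun i => (s i)⁻¹) * Matrix.diagonal d
            * Matrix.diagonal (fun i => (s i)⁻¹) = 1 := by
          rw [Matrix.diagonal_mul_diagonal, Matrix.diagonal_mul_diagonal]
          rw [show (fun i => (s i)⁻¹ * d i * (s i)⁻¹) = fun _ : Fin n => (1:ℝ) from
            funext fun i => by
              rw [← hss i, mul_assoc, mul_assoc, mul_inv_cancel₀ (hs i).ne', mul_one,
                inv_mul_cancel₀ (hs i).ne'], Matrix.diagonal_one]
        rw [this, Matrix.one_mulVec]
      have h3 := hbd (S *ᵥ v)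
      rw [h1]
      calc b⁻¹ * ((S *ᵥ v) ⬝ᵥ A *ᵥ (S *ᵥ v))
          ≤ b⁻¹ * (b * ((S *ᵥ v) ⬝ᵥ Matrix.diagonal d *ᵥ (S *ᵥ v))) := by
            apply mul_le_mul_of_nonneg_left _ (inv_pos.mpr hb).le
            simpa using h3
        _ = v ⬝ᵥ v := by rw [h2, ← mul_assoc, inv_mul_cancel₀ hb.ne', one_mul]
    have h4 : μ i * (v ⬝ᵥ v) ≤ v ⬝ᵥ v := by
      have : v ⬝ᵥ B *ᵥ v = μ i * (v ⬝ᵥ v) := by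
        rw [hBv, dotProduct_smul, smul_eq_mul]
      linarith [hray, this.symm.le, this.le]
    nlinarith [hvv]
  set pe : Fin n → ℝ := fun i => p.eval (μ i) with hpedef
  set g : Fin n → ℝ := fun i => 1 - pe i with hgdef
  have hg : ∀ i, 0 < g i := by
    intro i
    have := hp (μ i) (hμpos i) (hμle i)
    have := abs_lt.mp this
    simp only [hgdef, hpedef]
    linarith [this.2]
  have hg1 : ∀ i, 0 < 1 + pe i := by
    intro i
    have := abs_lt.mp (hp (μ i) (hμpos i) (hμle i))
    simp only [hpedef]
    linarith [this.1]
  -- conjugation identity for the statement matrix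
  have hX : b⁻¹ • ((Matrix.diagonal (fun i => A i i))⁻¹ * A) = S * B * T := by
    rw [show (fun i => A i i) = d from rfl, hDinv, hBdef, Matrix.mul_smul, Matrix.smul_mul]
    congr 1
    simp only [Matrix.mul_assoc, hST, Matrix.mul_one]
  have haevalB : Polynomial.aeval B p = V * Matrix.diagonal pe * star V := by
    rw [hspec, myaeval_conj _ _ _ hVVs hVsV, myaeval_diagonal]
  have haevalX : Polynomial.aeval (b⁻¹ • ((Matrix.diagonal (fun i => A i i))⁻¹ * A)) p
      = S * (V * Matrix.diagonal pe * star V) * T := by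
    rw [hX, myaeval_conj _ _ _ hST hTS, haevalB]
  have hE : (1 : Matrix (Fin n) (Fin n) ℝ)
      - Polynomial.aeval (b⁻¹ • ((Matrix.diagonal (fun i => A i i))⁻¹ * A)) p
      = S * (V * Matrix.diagonal g * star V) * T := by
    rw [haevalX]
    have h1 : (1 : Matrix (Fin n) (Fin n) ℝ)
        = S * (V * Matrix.diagonal (fun _ => (1:ℝ)) * star V) * T := by
      rw [show Matrix.diagonal (fun _ : Fin n => (1:ℝ)) = 1 from Matrix.diagonal_one,
        Matrix.mul_one, hVVs, Matrix.mul_one, hST]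
    rw [h1, ← sub_mul, ← mul_sub, ← sub_mul, ← mul_sub, ← Matrix.diagonal_sub]
  set F : Matrix (Fin n) (Fin n) ℝ :=
    S * (V * Matrix.diagonal (fun i => (g i)⁻¹) * star V) * T with hFdef
  have hEF : (((1 : Matrix (Fin n) (Fin n) ℝ)
      - Polynomial.aeval (b⁻¹ • ((Matrix.diagonal (fun i => A i i))⁻¹ * A)) p)) * F = 1 := by
    rw [hE, hFdef]
    simp only [Matrix.mul_assoc]
    rw [cancel2, cancel1, dcancel]
    have : (fun i => g i * (g i)⁻¹) = fun _ : Fin n => (1:ℝ) := by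
      funext i; exact mul_inv_cancel₀ (hg i).ne'
    rw [this, Matrix.diagonal_one, Matrix.one_mul, ← Matrix.mul_assoc V (star V) T, hVVs,
      Matrix.one_mul, hST]
  have hunit : IsUnit ((1 : Matrix (Fin n) (Fin n) ℝ)
      - Polynomial.aeval (b⁻¹ • ((Matrix.diagonal (fun i => A i i))⁻¹ * A)) p) := by
    rw [Matrix.isUnit_iff_isUnit_det]
    exact IsUnit.of_mul_eq_one _ (by rw [← Matrix.det_mul, hEF, Matrix.det_one])
  have hEinv : (((1 : Matrix (Fin n) (Fin n) ℝ)
      - Polynomial.aeval (b⁻¹ • ((Matrix.diagonal (fun i => A i i))⁻¹ * A)) p))⁻¹ = F :=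
    Matrix.inv_eq_right_inv hEF
  -- A in decomposed form
  have hAeq : A = b • ((T * V) * Matrix.diagonal μ * (T * V)ᴴ) := by
    have h1 : T * (S * A * S) * T = A := by
      simp only [Matrix.mul_assoc, hST, Matrix.mul_one]
      rw [cancel2]
    have h2 : S * A * S = b • B := by
      rw [hBdef, smul_smul, mul_inv_cancel₀ hb.ne', one_smul]
    rw [Matrix.conjTranspose_mul, hTh, hVh, ← h1, h2, hspec]
    rw [Matrix.mul_smul, Matrix.smul_mul]
    congr 1
    simp only [Matrix.mul_assoc]
  set C : Matrix (Fin n) (Fin n) ℝ := T * V with hCdef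
  have hCunit : IsUnit C := IsUnit.mul (unitOf hTS) (unitOf hVVs)
  set w : Fin n → ℝ := fun i => μ i * (g i)⁻¹ with hwdef
  have hw : ∀ i, 0 < w i := fun i => mul_pos (hμpos i) (inv_pos.mpr (hg i))
  have hM : A * (((1 : Matrix (Fin n) (Fin n) ℝ)
      - Polynomial.aeval (b⁻¹ • ((Matrix.diagonal (fun i => A i i))⁻¹ * A)) p))⁻¹
      = b • (C * Matrix.diagonal w * Cᴴ) := by
    rw [hEinv, hAeq, hFdef, Matrix.smul_mul, hCdef, Matrix.conjTranspose_mul, hTh, hVh]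
    congr 1
    simp only [Matrix.mul_assoc]
    rw [cancel2, cancel1, dcancel]
  have hMpd : (A * (((1 : Matrix (Fin n) (Fin n) ℝ)
      - Polynomial.aeval (b⁻¹ • ((Matrix.diagonal (fun i => A i i))⁻¹ * A)) p))⁻¹).PosDef := by
    rw [hM]
    exact myposdef_smul hb (myposdef_conj (Matrix.PosDef.diagonal hw) hCunit)
  refine ⟨hunit, hMpd, ?_⟩
  have h2M : (2 : ℝ) • (A * (((1 : Matrix (Fin n) (Fin n) ℝ)
      - Polynomial.aeval (b⁻¹ • ((Matrix.diagonal (fun i => A i i))⁻¹ * A)) p))⁻¹) - A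
      = b • (C * Matrix.diagonal (fun i => 2 * w i - μ i) * Cᴴ) := by
    rw [hM, hAeq]
    rw [smul_comm (2:ℝ) b, ← smul_sub]
    congr 1
    have hdiag : Matrix.diagonal (fun i => 2 * w i - μ i)
        = (2:ℝ) • Matrix.diagonal w - Matrix.diagonal μ := by
      rw [← Matrix.diagonal_smul, ← Matrix.diagonal_sub]
      congr 1
    rw [hdiag, mul_sub, sub_mul, mul_smul_comm, smul_mul_assoc]
  rw [h2M]
  refine myposdef_smul hb (myposdef_conj (Matrix.PosDef.diagonal ?_) hCunit)
  intro i
  have hgpos : 0 < 1 - pe i := by have := hg i; simpa [hgdef] using this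
  have hgne : (1:ℝ) - pe i ≠ 0 := hgpos.ne'
  have : 2 * w i - μ i = μ i * (1 + pe i) / (1 - pe i) := by
    simp only [hwdef, hgdef]
    field_simp
    ring
  rw [this]
  exact div_pos (mul_pos (hμpos i) (hg1 i)) hgpos
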